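/- Let λ ∈ ℝ \ {0} and let f : Ω → ℝ be a regular c_λ-convex function on a nonempty open convex set Ω ⊂ ℝ^d, with Ω' = ∇^{c_λ} f(Ω) and f^{c_λ} its c_λ-conjugate regarded as a function on Ω'. Then the double conjugate recovers f: for every u ∈ Ω, f(u) = sup_{v ∈ Ω'} { (1/λ)·log(1 + λ u·v) − f^{c_λ}(v) }, i.e. (f^{c_λ})^{c_λ} = f on Ω. -/

import Mathlib

open MeasureTheory Real
open scoped RealInnerProductSpace ENNReal BigOperators

noncomputable section

lemma aux_sub_le {x y : EReal} {r : ℝ} (h : x - (r : EReal) ≤ y) : x - y ≤ (r : EReal) := by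
  induction x using EReal.rec with
  | bot => rw [EReal.bot_sub]; exact bot_le
  | coe a =>
    induction y using EReal.rec with
    | bot =>
      rw [← EReal.coe_sub] at h
      exact (EReal.coe_ne_bot _ (le_bot_iff.mp h)).elim
    | coe b =>
      rw [← EReal.coe_sub] at h ⊢
      exact EReal.coe_le_coe_iff.mpr (by linarith [EReal.coe_le_coe_iff.mp h])
    | top =>
      have : (a : EReal) - ⊤ = ⊥ := by rw [sub_eq_add_neg]; simp
      rw [this]; exact bot_le
  | top =>
    have hy : y = ⊤ := top_le_iff.mp (by rwa [EReal.top_sub_coe] at h)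
    subst hy
    have : (⊤ : EReal) - ⊤ = ⊥ := by rw [sub_eq_add_neg]; simp
    rw [this]; exact bot_le

lemma aux_grad_convex_ineq {d : ℕ} (lam : ℝ)
    (Ω : Set (EuclideanSpace ℝ (Fin d))) (f : EuclideanSpace ℝ (Fin d) → ℝ)
    (hopen : IsOpen Ω) (hconv : Convex ℝ Ω) (hsmooth : ContDiffOn ℝ (⊤ : ℕ∞) f Ω)
    (hhess : ∀ u ∈ Ω, ∀ w : EuclideanSpace ℝ (Fin d), w ≠ 0 →
      0 < ⟪fderiv ℝ (gradient fun z => (1 / lam) * (Real.exp (lam * f z) - 1)) u w, w⟫)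
    {u u' : EuclideanSpace ℝ (Fin d)} (hu : u ∈ Ω) (hu' : u' ∈ Ω) :
    ⟪gradient (fun z => (1 / lam) * (Real.exp (lam * f z) - 1)) u, u' - u⟫ ≤
      (1 / lam) * (Real.exp (lam * f u') - 1) - (1 / lam) * (Real.exp (lam * f u) - 1) := by
  by_cases hw0 : u' = u
  · subst hw0; simp
  set F : EuclideanSpace ℝ (Fin d) → ℝ := fun z => (1 / lam) * (Real.exp (lam * f z) - 1)
    with hFdef
  set w : EuclideanSpace ℝ (Fin d) := u' - u with hwdef
  have hw : w ≠ 0 := sub_ne_zero.mpr hw0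
  have hFsm : ContDiffOn ℝ (⊤ : ℕ∞) F Ω := by
    apply ContDiffOn.mul contDiffOn_const
    exact (Real.contDiff_exp.comp_contDiffOn (contDiffOn_const.mul hsmooth)).sub contDiffOn_const
  have hFd : ∀ x ∈ Ω, DifferentiableAt ℝ F x := fun x hx =>
    ((hFsm.differentiableOn (by simp)) x hx).differentiableAt (hopen.mem_nhds hx)
  have hGsm : ContDiffOn ℝ (⊤ : ℕ∞) (fderiv ℝ F) Ω :=
    hFsm.fderiv_of_isOpen hopen (by exact_mod_cast le_top)
  have hGd : ∀ x ∈ Ω, DifferentiableAt ℝ (gradient F) x := by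
    intro x hx
    have h1 : DifferentiableAt ℝ (fderiv ℝ F) x :=
      ((hGsm.differentiableOn (by simp)) x hx).differentiableAt (hopen.mem_nhds hx)
    have h2 : DifferentiableAt ℝ
        (fun y => (InnerProductSpace.toDual ℝ (EuclideanSpace ℝ (Fin d))).symm
          (fderiv ℝ F y)) x :=
      ((InnerProductSpace.toDual ℝ
        (EuclideanSpace ℝ (Fin d))).symm.toContinuousLinearEquiv.differentiableAt).comp x h1
    exact h2
  -- the line
  have hline : ∀ θ : ℝ, HasDerivAt (fun θ : ℝ => u + θ • w) w θ := by
    intro θ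
    simpa using ((hasDerivAt_id θ).smul_const w).const_add u
  have hseg : ∀ θ ∈ Set.Icc (0:ℝ) 1, u + θ • w ∈ Ω := fun θ hθ =>
    hconv.add_smul_sub_mem hu hu' hθ
  have hψ : ∀ θ : ℝ, u + θ • w ∈ Ω →
      HasDerivAt (fun θ : ℝ => ⟪gradient F (u + θ • w), w⟫)
        ⟪fderiv ℝ (gradient F) (u + θ • w) w, w⟫ θ := by
    intro θ hθ
    have h2 : HasDerivAt (fun θ : ℝ => gradient F (u + θ • w))
        (fderiv ℝ (gradient F) (u + θ • w) w) θ :=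
      by have := ((hGd _ hθ).hasFDerivAt).comp_hasDerivAt θ (hline θ); exact this
    have h3 : HasDerivAt (fun θ : ℝ => innerSL ℝ w (gradient F (u + θ • w)))
        (innerSL ℝ w (fderiv ℝ (gradient F) (u + θ • w) w)) θ :=
      ((innerSL ℝ w).hasFDerivAt).comp_hasDerivAt θ h2
    have e1 : ∀ y : EuclideanSpace ℝ (Fin d), innerSL ℝ w y = ⟪y, w⟫ := fun y => by
      rw [innerSL_apply_apply]; exact real_inner_comm _ _
    simp only [e1] at h3
    exact h3
  have hφ : ∀ θ : ℝ, u + θ • w ∈ Ω →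
      HasDerivAt (fun θ : ℝ => F (u + θ • w)) ⟪gradient F (u + θ • w), w⟫ θ := by
    intro θ hθ
    have hg : HasGradientAt F (gradient F (u + θ • w)) (u + θ • w) :=
      (hFd _ hθ).hasGradientAt
    have h5 : HasDerivAt (fun θ : ℝ => F (u + θ • w))
        ((InnerProductSpace.toDual ℝ (EuclideanSpace ℝ (Fin d)))
          (gradient F (u + θ • w)) w) θ :=
      by have := hg.hasFDerivAt.comp_hasDerivAt θ (hline θ); exact this
    rwa [InnerProductSpace.toDual_apply_apply] at h5
  obtain ⟨c, hc, hceq⟩ := exists_hasDerivAt_eq_slope (fun θ : ℝ => F (u + θ • w))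
    (fun θ : ℝ => ⟪gradient F (u + θ • w), w⟫) one_pos
    (fun θ hθ => ((hφ θ (hseg θ hθ)).continuousAt).continuousWithinAt)
    (fun θ hθ => hφ θ (hseg θ (Set.Ioo_subset_Icc_self hθ)))
  have hsub : Set.Icc (0:ℝ) c ⊆ Set.Icc (0:ℝ) 1 :=
    Set.Icc_subset_Icc le_rfl hc.2.le
  have hmono : StrictMonoOn (fun θ : ℝ => ⟪gradient F (u + θ • w), w⟫) (Set.Icc 0 c) := by
    apply strictMonoOn_of_deriv_pos (convex_Icc 0 c)
    · exact fun θ hθ => ((hψ θ (hseg θ (hsub hθ))).continuousAt).continuousWithinAt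
    · intro θ hθ
      rw [interior_Icc] at hθ
      have hθΩ : u + θ • w ∈ Ω :=
        hseg θ (hsub ⟨hθ.1.le, hθ.2.le⟩)
      rw [(hψ θ hθΩ).deriv]
      exact hhess _ hθΩ w hw
  have h01 : (⟪gradient F (u + (0:ℝ) • w), w⟫ : ℝ) < ⟪gradient F (u + c • w), w⟫ :=
    hmono ⟨le_rfl, hc.1.le⟩ ⟨hc.1.le, le_rfl⟩ hc.1
  have h0 : u + (0:ℝ) • w = u := by simp
  have h1 : u + (1:ℝ) • w = u' := by rw [hwdef]; simp
  rw [h0] at h01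
  rw [h1, h0] at hceq
  have : (⟪gradient F (u + c • w), w⟫ : ℝ) = F u' - F u := by
    rw [hceq]; ring
  rw [this] at h01
  exact h01.le

lemma aux_gradF_eq {d : ℕ} (lam : ℝ) (hlam : lam ≠ 0)
    (f : EuclideanSpace ℝ (Fin d) → ℝ) {x : EuclideanSpace ℝ (Fin d)}
    (hfd : DifferentiableAt ℝ f x) :
    gradient (fun z => (1 / lam) * (Real.exp (lam * f z) - 1)) x
      = Real.exp (lam * f x) • gradient f x := by
  have hg : HasGradientAt f (gradient f x) x := hfd.hasGradientAt
  have h1 := hg.hasFDerivAt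
  have hd : HasDerivAt (fun t : ℝ => (1 / lam) * (Real.exp (lam * t) - 1))
      (Real.exp (lam * f x)) (f x) := by
    have h2 : HasDerivAt (fun t : ℝ => lam * t) lam (f x) := by
      simpa using (hasDerivAt_id (f x)).const_mul lam
    have h4 := (h2.exp.sub_const 1).const_mul (1 / lam)
    exact h4.congr_deriv (by field_simp)
  have h5 := hd.comp_hasFDerivAt x h1
  have h6 : HasGradientAt (fun z => (1 / lam) * (Real.exp (lam * f z) - 1))
      (Real.exp (lam * f x) • gradient f x) x := by
    rw [hasGradientAt_iff_hasFDerivAt, _root_.map_smul]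
    exact h5
  exact h6.gradient

/-- The negative logarithmic cost `-c_λ(u,v) = (1/λ)·log(1 + λ u·v)`, valued in `EReal`,
with the convention `log t = -∞` for `t ≤ 0` (so that `(1/λ)·(-∞) = -∞` for `λ > 0` and
`= +∞` for `λ < 0`). -/
def negCost {d : ℕ} (lam : ℝ) (u v : EuclideanSpace ℝ (Fin d)) : EReal :=
  if 0 < 1 + lam * ⟪u, v⟫ then (((1 / lam) * Real.log (1 + lam * ⟪u, v⟫) : ℝ) : EReal)
  else if 0 < lam then ⊥ else ⊤

/-- The `c_λ`-conjugate `f^{c_λ}(v) = sup_{u ∈ Ω} { (1/λ)·log(1 + λ u·v) − f(u) }`. -/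
def lamConj {d : ℕ} (lam : ℝ) (Ω : Set (EuclideanSpace ℝ (Fin d)))
    (f : EuclideanSpace ℝ (Fin d) → ℝ) (v : EuclideanSpace ℝ (Fin d)) : EReal :=
  ⨆ u ∈ Ω, (negCost lam u v - ((f u : ℝ) : EReal))

/-- The `λ`-gradient (deformed Legendre transform) `∇^{c_λ} f(u) = ∇f(u)/(1 − λ ∇f(u)·u)`. -/
def lamGrad {d : ℕ} (lam : ℝ) (f : EuclideanSpace ℝ (Fin d) → ℝ)
    (u : EuclideanSpace ℝ (Fin d)) : EuclideanSpace ℝ (Fin d) :=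
  (1 - lam * ⟪gradient f u, u⟫)⁻¹ • gradient f u

/-- A regular `c_λ`-convex function: `f` smooth on a nonempty open convex `Ω`, the Hessian of
`F_λ = (1/λ)(e^{λ f} − 1)` strictly positive definite on `Ω`, and `1 − λ ∇f(u)·u > 0` on `Ω`. -/
def IsRegularCConvex {d : ℕ} (lam : ℝ) (Ω : Set (EuclideanSpace ℝ (Fin d)))
    (f : EuclideanSpace ℝ (Fin d) → ℝ) : Prop :=
  Ω.Nonempty ∧ IsOpen Ω ∧ Convex ℝ Ω ∧ ContDiffOn ℝ (⊤ : ℕ∞) f Ω ∧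
    (∀ u ∈ Ω, ∀ w : EuclideanSpace ℝ (Fin d), w ≠ 0 →
      0 < ⟪fderiv ℝ (gradient fun z => (1 / lam) * (Real.exp (lam * f z) - 1)) u w, w⟫) ∧
    ∀ u ∈ Ω, 0 < 1 - lam * ⟪gradient f u, u⟫

/-- For a regular `c_λ`-convex function `f` on `Ω`, with `Ω' = ∇^{c_λ} f(Ω)`
and `f^{c_λ}` its `c_λ`-conjugate regarded as a function on `Ω'`, the double conjugate recovers
`f`: for every `u ∈ Ω`, `f(u) = sup_{v ∈ Ω'} { (1/λ)·log(1 + λ u·v) − f^{c_λ}(v) }`. -/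
theorem lamConj_involutive {d : ℕ} (lam : ℝ) (hlam : lam ≠ 0)
    (Ω : Set (EuclideanSpace ℝ (Fin d))) (f : EuclideanSpace ℝ (Fin d) → ℝ)
    (hreg : IsRegularCConvex lam Ω f)
    (u : EuclideanSpace ℝ (Fin d)) (hu : u ∈ Ω) :
    (f u : EReal) = ⨆ v ∈ lamGrad lam f '' Ω, (negCost lam u v - lamConj lam Ω f v) := by
  obtain ⟨hne, hopen, hconv, hsmooth, hhess, hpos⟩ := hreg
  have hfd : ∀ x ∈ Ω, DifferentiableAt ℝ f x := fun x hx =>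
    ((hsmooth.differentiableOn (by simp)) x hx).differentiableAt
      (hopen.mem_nhds hx)
  have hs : 0 < 1 - lam * ⟪gradient f u, u⟫ := hpos u hu
  have key : ∀ u' ∈ Ω, (lam < 0 → 0 < 1 + lam * ⟪gradient f u, u' - u⟫) ∧
      (0 < 1 + lam * ⟪gradient f u, u' - u⟫ →
        (1 / lam) * Real.log (1 + lam * ⟪gradient f u, u' - u⟫) ≤ f u' - f u) := by
    intro u' hu'
    have h1 := aux_grad_convex_ineq lam Ω f hopen hconv hsmooth hhess hu hu'
    rw [aux_gradF_eq lam hlam f (hfd u hu), real_inner_smul_left] at h1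
    set e : ℝ := Real.exp (lam * f u) with hedef
    set e' : ℝ := Real.exp (lam * f u') with he'def
    set ip : ℝ := ⟪gradient f u, u' - u⟫ with hipdef
    set t : ℝ := 1 + lam * ip with htdef
    have hepos : 0 < e := Real.exp_pos _
    have he'pos : 0 < e' := Real.exp_pos _
    have hring : e * t = e + lam * (e * ip) := by rw [htdef]; ring
    have heq : 1/lam * (e' - 1) - 1/lam * (e - 1) = 1/lam * (e' - e) := by ring
    rw [heq] at h1
    rcases hlam.lt_or_gt with hl | hl
    · have hmul : lam * ((1/lam) * (e' - e)) ≤ lam * (e * ip) :=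
        mul_le_mul_of_nonpos_left h1 hl.le
      have hsimp : lam * ((1/lam) * (e' - e)) = e' - e := by field_simp
      have h2 : e' ≤ e * t := by linarith
      have ht : 0 < t := by nlinarith [h2, hepos, he'pos]
      refine ⟨fun _ => ht, fun _ => ?_⟩
      have hlog : Real.log e' ≤ Real.log (e * t) :=
        (Real.log_le_log_iff he'pos (mul_pos hepos ht)).mpr h2
      rw [Real.log_mul hepos.ne' ht.ne', hedef, he'def, Real.log_exp, Real.log_exp] at hlog
      have h3 : lam * (f u' - f u) ≤ Real.log t := by linarith
      have h4 := mul_le_mul_of_nonpos_left h3 (le_of_lt (one_div_neg.mpr hl))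
      have h5 : (1/lam) * (lam * (f u' - f u)) = f u' - f u := by field_simp
      linarith
    · have hmul : lam * (e * ip) ≤ lam * ((1/lam) * (e' - e)) :=
        mul_le_mul_of_nonneg_left h1 hl.le
      have hsimp : lam * ((1/lam) * (e' - e)) = e' - e := by field_simp
      have h2 : e * t ≤ e' := by linarith
      refine ⟨fun h => (lt_asymm hl h).elim, fun ht => ?_⟩
      have hlog : Real.log (e * t) ≤ Real.log e' :=
        (Real.log_le_log_iff (mul_pos hepos ht) he'pos).mpr h2
      rw [Real.log_mul hepos.ne' ht.ne', hedef, he'def, Real.log_exp, Real.log_exp] at hlog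
      have h3 : Real.log t ≤ lam * (f u' - f u) := by linarith
      have h4 := mul_le_mul_of_nonneg_left h3 (le_of_lt (one_div_pos.mpr hl))
      have h5 : (1/lam) * (lam * (f u' - f u)) = f u' - f u := by field_simp
      linarith
  have hipv : ∀ u'' : EuclideanSpace ℝ (Fin d),
      1 + lam * ⟪u'', lamGrad lam f u⟫ =
        (1 + lam * ⟪gradient f u, u'' - u⟫) / (1 - lam * ⟪gradient f u, u⟫) := by
    intro u''
    simp only [lamGrad]
    rw [real_inner_smul_right, inner_sub_right, real_inner_comm u'' (gradient f u)]
    set X : ℝ := ⟪gradient f u, u''⟫ with hX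
    set C : ℝ := ⟪gradient f u, u⟫ with hC
    field_simp
    ring
  have h10 : 1 + lam * ⟪u, lamGrad lam f u⟫ = 1 / (1 - lam * ⟪gradient f u, u⟫) := by
    rw [hipv u]
    simp
  have hcostu : negCost lam u (lamGrad lam f u) =
      (((1/lam) * Real.log (1 / (1 - lam * ⟪gradient f u, u⟫)) : ℝ) : EReal) := by
    simp only [negCost]
    rw [h10, if_pos (one_div_pos.mpr hs)]
  have hconj : lamConj lam Ω f (lamGrad lam f u) =
      (((1/lam) * Real.log (1 / (1 - lam * ⟪gradient f u, u⟫)) - f u : ℝ) : EReal) := by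
    apply le_antisymm
    · unfold lamConj
      apply iSup₂_le
      intro u' hu'
      by_cases ht : 0 < 1 + lam * ⟪gradient f u, u' - u⟫
      · have hcost : negCost lam u' (lamGrad lam f u) =
            (((1/lam) * Real.log ((1 + lam * ⟪gradient f u, u' - u⟫) /
              (1 - lam * ⟪gradient f u, u⟫)) : ℝ) : EReal) := by
          simp only [negCost]
          rw [hipv u', if_pos (div_pos ht hs)]
        rw [hcost, ← EReal.coe_sub, EReal.coe_le_coe_iff]
        have hlog := (key u' hu').2 ht
        rw [Real.log_div ht.ne' hs.ne', Real.log_div one_ne_zero hs.ne', Real.log_one]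
        ring_nf
        ring_nf at hlog
        linarith
      · have hlp : 0 < lam := by
          rcases hlam.lt_or_gt with h|h
          · exact absurd ((key u' hu').1 h) ht
          · exact h
        have hncon : ¬ (0 < (1 + lam * ⟪gradient f u, u' - u⟫) /
            (1 - lam * ⟪gradient f u, u⟫)) := by
          intro hcon
          apply ht
          have h2 := mul_pos hcon hs
          rwa [div_mul_cancel₀ _ hs.ne'] at h2
        have hcost : negCost lam u' (lamGrad lam f u) = ⊥ := by
          simp only [negCost]
          rw [hipv u', if_neg hncon, if_pos hlp]
        rw [hcost, EReal.bot_sub]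
        exact bot_le
    · have hterm : (((1/lam) * Real.log (1 / (1 - lam * ⟪gradient f u, u⟫)) - f u : ℝ) : EReal)
          = negCost lam u (lamGrad lam f u) - ((f u : ℝ) : EReal) := by
        rw [hcostu, ← EReal.coe_sub]
      rw [hterm]
      unfold lamConj
      exact le_iSup₂ (f := fun x (_ : x ∈ Ω) =>
        negCost lam x (lamGrad lam f u) - ((f x : ℝ) : EReal)) u hu
  apply le_antisymm
  · refine le_iSup₂_of_le (lamGrad lam f u) ⟨u, hu, rfl⟩ ?_
    rw [hcostu, hconj, ← EReal.coe_sub, EReal.coe_le_coe_iff]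
    linarith
  · apply iSup₂_le
    intro v' hv'
    refine aux_sub_le (r := f u) ?_
    have h1 : negCost lam u v' - ((f u : ℝ) : EReal) ≤ lamConj lam Ω f v' := by
      unfold lamConj
      exact le_iSup₂ (f := fun x (_ : x ∈ Ω) =>
        negCost lam x v' - ((f x : ℝ) : EReal)) u hu
    exact h1
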